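/- arXiv:1205.0512 — 5 statements merged into one kernel-verified Lean document; each statement's English description precedes it below -/
import Mathlib

section
/- Let ω be a Borel probability measure on ℝ, α ∈ (0,2], and suppose ∫_ℝ |λ|^α dω(λ) < ∞. With v(t) := ∫_ℝ e^{−iλt} dω(λ) and P(t) := |v(t)|², one has for all t > 0: 1 − P(t) ≤ 4 t^α ∫_ℝ |λ|^α dω(λ). -/
open MeasureTheory

lemma sin_sq_le_rpow (y α : ℝ) (hα0 : 0 < α) (hα2 : α ≤ 2) :
    Real.sin y ^ 2 ≤ |y| ^ α := by
  rcases eq_or_ne y 0 with rfl | hy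
  · simp [Real.rpow_eq_zero_iff_of_nonneg, hα0.ne']
  rcases le_or_gt 1 |y| with h1 | h1
  · calc Real.sin y ^ 2 ≤ 1 := Real.sin_sq_le_one y
      _ ≤ |y| ^ α := Real.one_le_rpow h1 hα0.le
  · calc Real.sin y ^ 2 ≤ y ^ 2 := Real.sin_sq_le_sq
      _ = |y| ^ (2 : ℝ) := by
          rw [← sq_abs, ← Real.rpow_natCast |y| 2]; norm_num
      _ ≤ |y| ^ α :=
          Real.rpow_le_rpow_of_exponent_ge (abs_pos.2 hy) h1.le hα2

/-- Upper bound on the decay: 1 − P(t) ≤ 4 t^α ⟨|λ|^α⟩. -/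
theorem decay_law_upper_bound (ω : Measure ℝ) [IsProbabilityMeasure ω]
    (α : ℝ) (hα0 : 0 < α) (hα2 : α ≤ 2)
    (hmom : Integrable (fun lam : ℝ => |lam| ^ α) ω)
    (v : ℝ → ℂ) (hv : ∀ t : ℝ, v t = ∫ lam : ℝ, Complex.exp (-Complex.I * lam * t) ∂ω)
    (P : ℝ → ℝ) (hP : ∀ t : ℝ, P t = ‖v t‖ ^ 2) :
    ∀ t : ℝ, 0 < t →
      1 - P t ≤ 4 * t ^ α * ∫ lam : ℝ, |lam| ^ α ∂ω := by
  intro t ht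
  set M : ℝ := ∫ lam : ℝ, |lam| ^ α ∂ω with hM
  have hM0 : 0 ≤ M := integral_nonneg fun lam => Real.rpow_nonneg (abs_nonneg _) _
  -- integrability of the exponential integrand
  have hexp_int : Integrable (fun lam : ℝ => Complex.exp (-Complex.I * lam * t)) ω := by
    apply Integrable.mono' (integrable_const (1 : ℝ))
    · refine Continuous.aestronglyMeasurable ?_
      exact Complex.continuous_exp.comp (by continuity)
    · filter_upwards with lam
      rw [show (-Complex.I * lam * t : ℂ) = Complex.I * (-(lam * t) : ℝ) by
        push_cast; ring]
      simp [Complex.norm_exp]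
  have hcos_int : Integrable (fun lam : ℝ => Real.cos (lam * t)) ω := by
    apply Integrable.mono' (integrable_const (1 : ℝ))
    · exact (Real.continuous_cos.comp (by continuity)).aestronglyMeasurable
    · filter_upwards with lam
      simpa using Real.abs_cos_le_one (lam * t)
  -- real part of v t
  have hre : (v t).re = ∫ lam : ℝ, Real.cos (lam * t) ∂ω := by
    rw [hv t]
    rw [show (∫ lam : ℝ, Complex.exp (-Complex.I * lam * t) ∂ω).re
        = RCLike.re (∫ lam : ℝ, Complex.exp (-Complex.I * lam * t) ∂ω) from rfl,
      ← integral_re hexp_int]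
    congr 1
    funext lam
    rw [show (-Complex.I * lam * t : ℂ) = ((-(lam * t) : ℝ) : ℂ) * Complex.I by
      push_cast; ring]
    simp [RCLike.re_to_complex, Complex.exp_re, Real.cos_neg]
  -- step 1 : 1 - P t ≤ 2 * (1 - (v t).re)
  have h1 : 1 - P t ≤ 2 * (1 - (v t).re) := by
    have hnsq : 0 ≤ Complex.normSq (1 - v t) := Complex.normSq_nonneg _
    have : Complex.normSq (1 - v t) = 1 - 2 * (v t).re + Complex.normSq (v t) := by
      simp [Complex.normSq_sub, Complex.normSq_one]
      ring
    rw [hP t, Complex.sq_norm]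
    nlinarith [this]
  -- step 2 : 1 - (v t).re ≤ 2 * (t/2)^α * M
  have h2 : 1 - (v t).re ≤ 2 * (t / 2) ^ α * M := by
    rw [hre]
    have hone : (1 : ℝ) = ∫ _ : ℝ, (1 : ℝ) ∂ω := by simp
    rw [hone, ← integral_sub (by simpa using integrable_const (1:ℝ)) hcos_int]
    have hconst : (2 * (t / 2) ^ α * M) = ∫ lam : ℝ, 2 * (t / 2) ^ α * (|lam| ^ α) ∂ω := by
      rw [integral_const_mul]
    rw [hconst]
    apply integral_mono (Integrable.sub (by simpa using integrable_const (1:ℝ)) hcos_int)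
      (hmom.const_mul _)
    intro lam
    have key : 1 - Real.cos (lam * t) = 2 * Real.sin (lam * t / 2) ^ 2 := by
      have h := Real.cos_two_mul (lam * t / 2)
      rw [show 2 * (lam * t / 2) = lam * t by ring] at h
      nlinarith [Real.sin_sq_add_cos_sq (lam * t / 2)]
    simp only [Pi.sub_apply]
    rw [key]
    have hs : Real.sin (lam * t / 2) ^ 2 ≤ |lam * t / 2| ^ α :=
      sin_sq_le_rpow _ α hα0 hα2
    have habs : |lam * t / 2| ^ α = (t / 2) ^ α * |lam| ^ α := by
      rw [show |lam * t / 2| = (t / 2) * |lam| by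
        rw [show lam * t / 2 = (t / 2) * lam by ring, abs_mul,
          abs_of_pos (by positivity : (0:ℝ) < t / 2)]]
      rw [Real.mul_rpow (by positivity) (abs_nonneg _)]
    nlinarith [hs, habs]
  -- combine
  have h3 : (t / 2) ^ α ≤ t ^ α :=
    Real.rpow_le_rpow (by positivity) (by linarith) hα0.le
  calc 1 - P t ≤ 2 * (1 - (v t).re) := h1
    _ ≤ 2 * (2 * (t / 2) ^ α * M) := by linarith
    _ = 4 * (t / 2) ^ α * M := by ring
    _ ≤ 4 * t ^ α * M := by nlinarith [h3, hM0]
end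

section
/- Let ω be a Borel probability measure on ℝ with ∫_ℝ |λ|^α dω(λ) < ∞ for some α > 1, and set P(t) := |∫_ℝ e^{−iλt} dω(λ)|². Then the one-sided derivative of P at 0 exists and equals 0, i.e. lim_{t→0+} (P(t) − 1)/t = 0. -/
open MeasureTheory Filter Topology

lemma one_sub_cos_le_rpow_aux {γ : ℝ} (h1 : 1 < γ) (h2 : γ ≤ 2) (x : ℝ) :
    1 - Real.cos x ≤ 2 ^ (1 - γ) * |x| ^ γ := by
  rcases eq_or_ne x 0 with rfl | hx0
  · simp [Real.zero_rpow (by positivity : γ ≠ 0)]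
  have hax : 0 < |x| := abs_pos.mpr hx0
  rcases le_or_gt (|x|) 2 with hx | hx
  · have h1' : 1 - Real.cos x ≤ x ^ 2 / 2 := by
      have := Real.one_sub_sq_div_two_le_cos (x := x); linarith
    have hx2 : x ^ 2 = |x| ^ γ * |x| ^ (2 - γ) := by
      rw [← Real.rpow_add hax, add_sub_cancel, Real.rpow_two, sq_abs]
    have h3 : |x| ^ (2 - γ) ≤ 2 ^ (2 - γ) :=
      Real.rpow_le_rpow (abs_nonneg x) hx (by linarith)
    have h4 : (2:ℝ) ^ (2 - γ) = 2 * 2 ^ (1 - γ) := by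
      rw [show (2:ℝ) - γ = 1 + (1 - γ) by ring, Real.rpow_add two_pos, Real.rpow_one]
    have h5 : 0 ≤ |x| ^ γ := Real.rpow_nonneg (abs_nonneg x) γ
    nlinarith [mul_le_mul_of_nonneg_left h3 h5]
  · have h1' : 1 - Real.cos x ≤ 2 := by
      have := Real.neg_one_le_cos x; linarith
    have h3 : (2:ℝ) ^ γ ≤ |x| ^ γ :=
      Real.rpow_le_rpow (by norm_num) hx.le (by linarith)
    have h4 : (2:ℝ) ^ (1 - γ) * 2 ^ γ = 2 := by
      rw [← Real.rpow_add two_pos]; norm_num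
    have h5 : (0:ℝ) < 2 ^ (1 - γ) := Real.rpow_pos_of_pos two_pos _
    nlinarith [mul_le_mul_of_nonneg_left h3 h5.le]

/-- Vanishing initial decay rate under a finite α-moment with α > 1. -/
theorem initial_decay_rate_zero (ω : Measure ℝ) [IsProbabilityMeasure ω]
    (α : ℝ) (hα : 1 < α)
    (hmom : Integrable (fun lam : ℝ => |lam| ^ α) ω)
    (P : ℝ → ℝ)
    (hP : ∀ t : ℝ, P t = ‖∫ lam : ℝ, Complex.exp (-Complex.I * lam * t) ∂ω‖ ^ 2) :
    Tendsto (fun t => (P t - 1) / t) (nhdsWithin 0 (Set.Ioi 0)) (nhds 0) := by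
  set γ : ℝ := min α 2 with hγdef
  have hγ1 : 1 < γ := lt_min hα one_lt_two
  have hγ2 : γ ≤ 2 := min_le_right _ _
  have hγα : γ ≤ α := min_le_left _ _
  -- the γ-moment is integrable
  have hMint : Integrable (fun l : ℝ => |l| ^ γ) ω := by
    have hcont : Continuous fun l : ℝ => |l| ^ γ :=
      continuous_abs.rpow_const fun x => Or.inr (by linarith)
    refine ((integrable_const (1:ℝ)).add hmom).mono' hcont.aestronglyMeasurable ?_
    filter_upwards with l
    rw [Real.norm_eq_abs, abs_of_nonneg (Real.rpow_nonneg (abs_nonneg l) γ)]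
    rcases le_or_gt (|l|) 1 with hl | hl
    · have : |l| ^ γ ≤ 1 := Real.rpow_le_one (abs_nonneg l) hl (by linarith)
      have : (0:ℝ) ≤ |l| ^ α := Real.rpow_nonneg (abs_nonneg l) α
      simp only [Pi.add_apply]; linarith
    · have : |l| ^ γ ≤ |l| ^ α := Real.rpow_le_rpow_left_iff hl |>.mpr hγα
      simp only [Pi.add_apply]; linarith
  set M : ℝ := ∫ l, |l| ^ γ ∂ω with hMdef
  have hM0 : 0 ≤ M := integral_nonneg fun l => Real.rpow_nonneg (abs_nonneg l) γ
  set C : ℝ := 2 * 2 ^ (1 - γ) * M with hCdef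
  have hC0 : 0 ≤ C := by positivity
  -- integrability of the exponential
  have hfint : ∀ t : ℝ, Integrable (fun l : ℝ => Complex.exp (-Complex.I * l * t)) ω := by
    intro t
    have hcont : Continuous fun l : ℝ => Complex.exp (-Complex.I * l * t) := by
      continuity
    refine (integrable_const (1:ℝ)).mono' hcont.aestronglyMeasurable ?_
    filter_upwards with l
    rw [Complex.norm_exp]
    simp
  -- norm of the integral is at most 1
  have hnorm_le : ∀ t : ℝ, ‖∫ l : ℝ, Complex.exp (-Complex.I * l * t) ∂ω‖ ≤ 1 := by
    intro t
    have := norm_integral_le_of_norm_le_const (μ := ω)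
      (f := fun l : ℝ => Complex.exp (-Complex.I * l * t)) (C := 1) ?_
    · simpa using this
    · filter_upwards with l
      rw [Complex.norm_exp]
      simp
  -- key bound: 1 - P t ≤ C * t ^ γ for t > 0
  have hkey : ∀ t : ℝ, 0 < t → 1 - P t ≤ C * t ^ γ := by
    intro t ht
    set z : ℂ := ∫ l : ℝ, Complex.exp (-Complex.I * l * t) ∂ω with hzdef
    have hre : z.re = ∫ l : ℝ, Real.cos (l * t) ∂ω := by
      rw [hzdef, ← RCLike.re_to_complex, ← integral_re (hfint t)]
      congr 1; ext l
      simp [RCLike.re_to_complex, Complex.exp_re]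
    -- cos integrable
    have hcosint : Integrable (fun l : ℝ => Real.cos (l * t)) ω := by
      refine (integrable_const (1:ℝ)).mono'
        ((Real.continuous_cos.comp (continuous_id.mul continuous_const)).aestronglyMeasurable) ?_
      filter_upwards with l
      rw [Real.norm_eq_abs]
      exact Real.abs_cos_le_one _
    have hint_le : 1 - z.re ≤ 2 ^ (1 - γ) * t ^ γ * M := by
      have h1 : 1 - z.re = ∫ l : ℝ, (1 - Real.cos (l * t)) ∂ω := by
        rw [hre, integral_sub (integrable_const 1) hcosint]
        simp
      rw [h1]
      have h2 : ∫ l : ℝ, (1 - Real.cos (l * t)) ∂ω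
          ≤ ∫ l : ℝ, (2 ^ (1 - γ) * t ^ γ) * |l| ^ γ ∂ω := by
        refine integral_mono ((integrable_const 1).sub hcosint) (hMint.const_mul _) ?_
        intro l
        have := one_sub_cos_le_rpow_aux hγ1 hγ2 (l * t)
        have habs : |l * t| ^ γ = |l| ^ γ * t ^ γ := by
          rw [abs_mul, abs_of_pos ht, Real.mul_rpow (abs_nonneg l) ht.le]
        calc 1 - Real.cos (l * t) ≤ 2 ^ (1 - γ) * |l * t| ^ γ := this
          _ = (2 ^ (1 - γ) * t ^ γ) * |l| ^ γ := by rw [habs]; ring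
      calc ∫ l : ℝ, (1 - Real.cos (l * t)) ∂ω
          ≤ ∫ l : ℝ, (2 ^ (1 - γ) * t ^ γ) * |l| ^ γ ∂ω := h2
        _ = 2 ^ (1 - γ) * t ^ γ * M := by rw [integral_const_mul]
    -- 1 - P t ≤ 2 (1 - z.re)
    have hz1 : ‖z‖ ≤ 1 := hnorm_le t
    have hre_le : z.re ≤ 1 := le_trans (Complex.re_le_norm z) hz1
    have hPz : P t = z.re ^ 2 + z.im ^ 2 := by
      rw [hP t, ← hzdef, Complex.sq_norm, Complex.normSq_apply]; ring
    have him : 0 ≤ z.im ^ 2 := sq_nonneg _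
    have hre_ge : -1 ≤ z.re := by
      have := neg_abs_le z.re
      have h2 : |z.re| ≤ ‖z‖ := Complex.abs_re_le_norm z
      linarith
    have : 1 - P t ≤ 2 * (1 - z.re) := by nlinarith
    calc 1 - P t ≤ 2 * (1 - z.re) := this
      _ ≤ 2 * (2 ^ (1 - γ) * t ^ γ * M) := by linarith
      _ = C * t ^ γ := by rw [hCdef]; ring
  have hPle1 : ∀ t : ℝ, P t ≤ 1 := by
    intro t
    rw [hP t]
    have := hnorm_le t
    nlinarith [norm_nonneg (∫ l : ℝ, Complex.exp (-Complex.I * l * t) ∂ω)]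
  -- squeeze
  have hlow : Tendsto (fun t : ℝ => -(C * t ^ (γ - 1))) (nhdsWithin 0 (Set.Ioi 0)) (nhds 0) := by
    have h1 : Tendsto (fun t : ℝ => t ^ (γ - 1)) (nhds 0) (nhds 0) := by
      have := (Real.continuousAt_rpow_const 0 (γ - 1) (Or.inr (by linarith))).tendsto
      rwa [Real.zero_rpow (by linarith : γ - 1 ≠ 0)] at this
    have h2 : Tendsto (fun t : ℝ => -(C * t ^ (γ - 1))) (nhds 0) (nhds (-(C * 0))) :=
      ((h1.const_mul C).neg)
    simpa using h2.mono_left nhdsWithin_le_nhds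
  refine tendsto_of_tendsto_of_tendsto_of_le_of_le' hlow tendsto_const_nhds ?_ ?_
  · filter_upwards [self_mem_nhdsWithin] with t ht
    have ht : (0:ℝ) < t := ht
    rw [neg_le, ← neg_div, div_le_iff₀ ht]
    have h6 : t ^ (γ - 1) * t = t ^ γ := by
      rw [← Real.rpow_add_one ht.ne']; norm_num
    calc -(P t - 1) = 1 - P t := by ring
      _ ≤ C * t ^ γ := hkey t ht
      _ = C * t ^ (γ - 1) * t := by rw [← h6]; ring
  · filter_upwards [self_mem_nhdsWithin] with t ht
    have ht : (0:ℝ) < t := ht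
    exact div_nonpos_of_nonpos_of_nonneg (by linarith [hPle1 t]) ht.le
end

section
/- Let ω be a Borel probability measure on ℝ and P(t) := |∫_ℝ e^{−iλt} dω(λ)|². Then for every t > 0, 1 − P(t) ≥ (2t²/π²) ∫∫_{[−π/(2t), π/(2t)]²} (λ−μ)² dω(λ) dω(μ). -/
open MeasureTheory

-- pointwise Jordan-type bound
lemma jordan_bound {t x : ℝ} (ht : 0 < t) (hx : |x| ≤ Real.pi / t) :
    2 * t ^ 2 / Real.pi ^ 2 * x ^ 2 ≤ 1 - Real.cos (x * t) := by
  have hπ := Real.pi_pos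
  have h1 : Real.cos (x * t) = 1 - 2 * Real.sin (x * t / 2) ^ 2 := by
    have h := Real.cos_two_mul (x * t / 2)
    have h2 := Real.sin_sq_add_cos_sq (x * t / 2)
    rw [show 2 * (x * t / 2) = x * t by ring] at h
    linarith
  have habs : |x * t / 2| ≤ Real.pi / 2 := by
    rw [abs_div, abs_mul, abs_of_pos ht, abs_of_pos (by norm_num : (0:ℝ) < 2)]
    rw [div_le_div_iff₀ (by norm_num) (by norm_num)]
    have : |x| * t ≤ Real.pi := by
      calc |x| * t ≤ (Real.pi / t) * t := by nlinarith [abs_nonneg x]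
      _ = Real.pi := by field_simp
    nlinarith
  have hj := Real.mul_abs_le_abs_sin habs
  have hsq : (2 / Real.pi * |x * t / 2|) ^ 2 ≤ Real.sin (x * t / 2) ^ 2 := by
    have h0 : 0 ≤ 2 / Real.pi * |x * t / 2| := by positivity
    calc (2 / Real.pi * |x * t / 2|) ^ 2 ≤ |Real.sin (x * t / 2)| ^ 2 := by
          apply pow_le_pow_left₀ h0 hj
      _ = Real.sin (x * t / 2) ^ 2 := sq_abs _
  rw [h1]
  have heq : (2 / Real.pi * |x * t / 2|) ^ 2 = t ^ 2 / Real.pi ^ 2 * x ^ 2 := by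
    rw [mul_pow, sq_abs]
    field_simp
  have h6 : 2 * t ^ 2 / Real.pi ^ 2 * x ^ 2 = 2 * (t ^ 2 / Real.pi ^ 2 * x ^ 2) := by ring
  rw [h6]
  linarith [hsq, heq.le, heq.ge]

/-- Lower bound on the decay probability via the truncated variance. -/
theorem decay_law_lower_bound (ω : Measure ℝ) [IsProbabilityMeasure ω]
    (P : ℝ → ℝ)
    (hP : ∀ t : ℝ, P t = ‖∫ lam : ℝ, Complex.exp (-Complex.I * lam * t) ∂ω‖ ^ 2) :
    ∀ t : ℝ, 0 < t →
      1 - P t ≥ (2 * t ^ 2 / Real.pi ^ 2) *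
        ∫ p in (Set.Icc (-(Real.pi / (2 * t))) (Real.pi / (2 * t)) ×ˢ
                Set.Icc (-(Real.pi / (2 * t))) (Real.pi / (2 * t))),
          (p.1 - p.2) ^ 2 ∂(ω.prod ω) := by
  intro t ht
  set c := Real.pi / (2 * t) with hc
  set S := Set.Icc (-c) c ×ˢ Set.Icc (-c) c with hS
  set f : ℝ → ℂ := fun lam => Complex.exp (-Complex.I * lam * t) with hf
  have hfc : Continuous f := by
    continuity
  have hfbound : ∀ x : ℝ, ‖f x‖ = 1 := by
    intro x
    show ‖Complex.exp (-Complex.I * (x:ℂ) * (t:ℂ))‖ = 1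
    rw [show -Complex.I * (x:ℂ) * (t:ℂ) = ((-(x*t) : ℝ) : ℂ) * Complex.I by push_cast; ring]
    exact Complex.norm_exp_ofReal_mul_I _
  -- the product integrand
  have key : P t = ∫ p : ℝ × ℝ, Real.cos ((p.1 - p.2) * t) ∂(ω.prod ω) := by
    have h1 : (‖∫ lam, f lam ∂ω‖ : ℝ) ^ 2
        = (((∫ lam, f lam ∂ω) * (starRingEnd ℂ) (∫ lam, f lam ∂ω))).re := by
      rw [Complex.mul_conj]
      simp [Complex.sq_norm]
    have h2 : (starRingEnd ℂ) (∫ lam, f lam ∂ω) = ∫ lam, (starRingEnd ℂ) (f lam) ∂ω :=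
      (integral_conj).symm
    have h3 : (∫ lam, f lam ∂ω) * (∫ mu, (starRingEnd ℂ) (f mu) ∂ω)
        = ∫ p : ℝ × ℝ, f p.1 * (starRingEnd ℂ) (f p.2) ∂(ω.prod ω) :=
      (integral_prod_mul f (fun mu => (starRingEnd ℂ) (f mu))).symm
    have hint : Integrable (fun p : ℝ × ℝ => f p.1 * (starRingEnd ℂ) (f p.2)) (ω.prod ω) := by
      apply (integrable_const (1:ℝ)).mono'
      · exact ((hfc.comp continuous_fst).mul
          ((Complex.continuous_conj.comp (hfc.comp continuous_snd)))).aestronglyMeasurable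
      · filter_upwards with p
        rw [norm_mul, hfbound, RCLike.norm_conj, hfbound]; norm_num
    have h4 : (∫ p : ℝ × ℝ, f p.1 * (starRingEnd ℂ) (f p.2) ∂(ω.prod ω)).re
        = ∫ p : ℝ × ℝ, (f p.1 * (starRingEnd ℂ) (f p.2)).re ∂(ω.prod ω) :=
      (integral_re hint).symm
    have h5 : ∀ p : ℝ × ℝ, (f p.1 * (starRingEnd ℂ) (f p.2)).re = Real.cos ((p.1 - p.2) * t) := by
      intro p
      simp only [hf]
      rw [← Complex.exp_conj, ← Complex.exp_add]
      have : (starRingEnd ℂ) (-Complex.I * p.2 * t) = Complex.I * p.2 * t := by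
        simp [map_mul]
      rw [this]
      rw [show -Complex.I * p.1 * t + Complex.I * p.2 * t
          = ((-((p.1 - p.2) * t) : ℝ) : ℂ) * Complex.I by push_cast; ring]
      rw [show (-((p.1 - p.2) * t) : ℝ) = ((p.2 - p.1) * t : ℝ) by ring]
      rw [Complex.exp_mul_I, ← Complex.ofReal_cos, ← Complex.ofReal_sin]
      simp only [Complex.add_re, Complex.ofReal_re, Complex.mul_re, Complex.ofReal_im,
        Complex.I_re, Complex.I_im, mul_zero, zero_mul, sub_zero, mul_one, add_zero,
        neg_zero, zero_sub, sub_neg_eq_add]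
      rw [show (p.2 - p.1) * t = -((p.1 - p.2) * t) by ring, Real.cos_neg]
    rw [hP t, h1, h2, h3, h4]
    exact integral_congr_ae (Filter.Eventually.of_forall h5)
  -- integrability of the cosine term
  have hcosint : Integrable (fun p : ℝ × ℝ => Real.cos ((p.1 - p.2) * t)) (ω.prod ω) := by
    apply (integrable_const (1:ℝ)).mono'
    · exact (Real.continuous_cos.comp
        (((continuous_fst.sub continuous_snd)).mul continuous_const)).aestronglyMeasurable
    · filter_upwards with p
      rw [Real.norm_eq_abs]
      exact Real.abs_cos_le_one _
  have honeminus : 1 - P t = ∫ p : ℝ × ℝ, (1 - Real.cos ((p.1 - p.2) * t)) ∂(ω.prod ω) := by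
    rw [key, integral_sub (integrable_const 1) hcosint]
    simp
  rw [honeminus]
  -- measurability of S
  have hScompact : IsCompact S := isCompact_Icc.prod isCompact_Icc
  have hSm : MeasurableSet S := hScompact.measurableSet
  -- step 1: restrict integral
  have hnonneg : 0 ≤ᵐ[ω.prod ω] fun p : ℝ × ℝ => 1 - Real.cos ((p.1 - p.2) * t) := by
    filter_upwards with p
    simp only [Pi.zero_apply]
    have := Real.cos_le_one ((p.1 - p.2) * t)
    linarith
  have step1 : ∫ p in S, (1 - Real.cos ((p.1 - p.2) * t)) ∂(ω.prod ω)
      ≤ ∫ p : ℝ × ℝ, (1 - Real.cos ((p.1 - p.2) * t)) ∂(ω.prod ω) :=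
    setIntegral_le_integral ((integrable_const 1).sub hcosint) hnonneg
  -- step 2: pointwise bound on S
  have hintS : IntegrableOn (fun p : ℝ × ℝ => 2 * t ^ 2 / Real.pi ^ 2 * (p.1 - p.2) ^ 2)
      S (ω.prod ω) := by
    apply ContinuousOn.integrableOn_compact hScompact
    exact (continuous_const.mul ((continuous_fst.sub continuous_snd).pow 2)).continuousOn
  have step2 : ∫ p in S, 2 * t ^ 2 / Real.pi ^ 2 * (p.1 - p.2) ^ 2 ∂(ω.prod ω)
      ≤ ∫ p in S, (1 - Real.cos ((p.1 - p.2) * t)) ∂(ω.prod ω) := by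
    apply setIntegral_mono_on hintS
      (((integrable_const 1).sub hcosint).integrableOn) hSm
    intro p hp
    obtain ⟨hp1, hp2⟩ := hp
    apply jordan_bound ht
    rw [abs_le]
    have h1 := hp1.1; have h2 := hp1.2; have h3 := hp2.1; have h4 := hp2.2
    have hcc : c + c = Real.pi / t := by
      rw [hc]; field_simp; ring
    constructor <;> linarith
  calc (2 * t ^ 2 / Real.pi ^ 2) * ∫ p in S, (p.1 - p.2) ^ 2 ∂(ω.prod ω)
      = ∫ p in S, 2 * t ^ 2 / Real.pi ^ 2 * (p.1 - p.2) ^ 2 ∂(ω.prod ω) := by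
        rw [integral_const_mul]
    _ ≤ ∫ p in S, (1 - Real.cos ((p.1 - p.2) * t)) ∂(ω.prod ω) := step2
    _ ≤ ∫ p : ℝ × ℝ, (1 - Real.cos ((p.1 - p.2) * t)) ∂(ω.prod ω) := step1
end

section
/- Let a, b ∈ ℝ, c ∈ ℂ, and k, κ > 0 be real. Set D := (a − ik)(b − iκ) − |c|², A := ((a + ik)(b − iκ) − |c|²)/D and B := 2ik c̄ / D. If D ≠ 0, then |A|² + (κ/k)|B|² = 1. Equivalently, |D|² − |(a + ik)(b − iκ) − |c|²|² = 4kκ|c|². -/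
/-- Two-channel unitarity above the threshold. -/
theorem two_channel_unitarity (a b : ℝ) (c : ℂ) (k κ : ℝ) (hk : 0 < k) (hκ : 0 < κ)
    (D A B : ℂ)
    (hD : D = ((a : ℂ) - Complex.I * k) * ((b : ℂ) - Complex.I * κ)
      - (‖c‖ : ℂ) ^ 2)
    (hA : A = (((a : ℂ) + Complex.I * k) * ((b : ℂ) - Complex.I * κ)
      - (‖c‖ : ℂ) ^ 2) / D)
    (hB : B = 2 * Complex.I * k * (starRingEnd ℂ c) / D)
    (hDne : D ≠ 0) :
    ‖A‖ ^ 2 + (κ / k) * ‖B‖ ^ 2 = 1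
    ∧ ‖D‖ ^ 2
        - ‖((a : ℂ) + Complex.I * k) * ((b : ℂ) - Complex.I * κ)
            - (‖c‖ : ℂ) ^ 2‖ ^ 2
      = 4 * k * κ * ‖c‖ ^ 2 := by
  set N : ℂ := ((a : ℂ) + Complex.I * k) * ((b : ℂ) - Complex.I * κ)
      - (‖c‖ : ℂ) ^ 2 with hN
  have key : ‖D‖ ^ 2 - ‖N‖ ^ 2 = 4 * k * κ * ‖c‖ ^ 2 := by
    rw [hD, hN, Complex.sq_norm, Complex.sq_norm, Complex.normSq_apply, Complex.normSq_apply]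
    simp [Complex.mul_re, Complex.mul_im, ← Complex.ofReal_pow]
    ring
  refine ⟨?_, key⟩
  have hDpos : 0 < ‖D‖ := by
    simpa [norm_pos_iff] using hDne
  have hAabs : ‖A‖ = ‖N‖ / ‖D‖ := by
    rw [hA, norm_div]
  have hBabs : ‖B‖ = 2 * k * ‖c‖ / ‖D‖ := by
    rw [hB, norm_div]
    congr 1
    simp [norm_mul, Complex.norm_conj, Complex.norm_real, Complex.norm_two, abs_of_pos hk]
  rw [hAabs, hBabs]
  field_simp
  linear_combination (-1 : ℝ) * key
end

section
/- Let l > 0 and b ∈ ℝ with 0 < |b| < √2. Then the set of complex solutions k of tan(kl) = −i b²/2 is exactly { nπ/l + (i/(2l)) ln((2 − b²)/(2 + b²)) : n ∈ ℤ }. -/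
/-- Resonances of a line with a Dirichlet stub: explicit solution set. -/
theorem stub_resonances (l b : ℝ) (hl : 0 < l) (hb0 : b ≠ 0) (hb : |b| < Real.sqrt 2) :
    {k : ℂ | Complex.tan (k * l) = -Complex.I * (b : ℂ) ^ 2 / 2}
      = {k : ℂ | ∃ n : ℤ, k = (n : ℂ) * Real.pi / l
          + (Complex.I / (2 * l)) * Real.log ((2 - b ^ 2) / (2 + b ^ 2))} := by
  have hb2 : b ^ 2 < 2 := by
    nlinarith [sq_abs b, Real.sq_sqrt (by norm_num : (0:ℝ) ≤ 2), abs_nonneg b,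
      Real.sqrt_nonneg 2]
  have hb2' : (0:ℝ) < b ^ 2 := by positivity
  set r : ℝ := (2 + b ^ 2) / (2 - b ^ 2) with hr
  have hrpos : 0 < r := by apply div_pos <;> linarith
  have hL : Real.log ((2 - b ^ 2) / (2 + b ^ 2)) = - Real.log r := by
    rw [hr, ← Real.log_inv]
    congr 1
    rw [inv_div]
  have hl0 : (l : ℂ) ≠ 0 := by exact_mod_cast hl.ne'
  have hI2 : Complex.I ^ 2 = -1 := Complex.I_sq
  have hb2c : (2 : ℂ) - (b:ℂ) ^ 2 ≠ 0 := by
    intro h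
    have : ((2 - b ^ 2 : ℝ) : ℂ) = 0 := by push_cast; linear_combination h
    have := Complex.ofReal_eq_zero.mp this
    linarith
  ext k
  simp only [Set.mem_setOf_eq]
  set c : ℂ := -Complex.I * (b : ℂ) ^ 2 / 2 with hc
  have hc0 : c ≠ 0 := by
    rw [hc]
    intro h
    rw [div_eq_zero_iff] at h
    rcases h with h | h
    · rcases mul_eq_zero.mp h with h | h
      · exact Complex.I_ne_zero (by simpa using h)
      · exact hb0 (by exact_mod_cast pow_eq_zero_iff (n := 2) (by norm_num) |>.mp h)
    · norm_num at h
  set w : ℂ := k * l with hw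
  set E : ℂ := Complex.exp (w * Complex.I) with hE
  have hEne : E ≠ 0 := Complex.exp_ne_zero _
  have hEi : Complex.exp (-w * Complex.I) = E⁻¹ := by
    rw [hE, neg_mul, Complex.exp_neg]
  have hE2 : Complex.exp (2 * w * Complex.I) = E ^ 2 := by
    rw [hE, ← Complex.exp_nat_mul]
    ring_nf
  have step1 : Complex.tan w = c ↔ Complex.sin w = c * Complex.cos w := by
    constructor
    · intro h
      have hcos : Complex.cos w ≠ 0 := by
        intro h0
        rw [Complex.tan_eq_sin_div_cos, h0, div_zero] at h
        exact hc0 h.symm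
      rw [Complex.tan_eq_sin_div_cos, div_eq_iff hcos] at h
      exact h
    · intro h
      have hcos : Complex.cos w ≠ 0 := by
        intro h0
        have hs : Complex.sin w = 0 := by rw [h, h0, mul_zero]
        have h1 := Complex.sin_sq_add_cos_sq w
        rw [hs, h0] at h1
        norm_num at h1
      rw [Complex.tan_eq_sin_div_cos, h, mul_div_assoc, div_self hcos, mul_one]
  have hEinv : E * E⁻¹ = 1 := mul_inv_cancel₀ hEne
  have step2 : Complex.sin w = c * Complex.cos w ↔
      Complex.exp (2 * w * Complex.I) = (r : ℂ) := by
    rw [Complex.sin, Complex.cos, hEi, ← hE, hE2, hr, hc]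
    push_cast
    have h12 : ((E⁻¹ - E) * Complex.I / 2
        = -Complex.I * (b:ℂ) ^ 2 / 2 * ((E + E⁻¹) / 2))
        ↔ ((1 - E ^ 2) * Complex.I
            = -Complex.I * (b:ℂ) ^ 2 / 2 * (E ^ 2 + 1)) := by
      constructor
      · intro h
        linear_combination (2 * E) * h
          + (-Complex.I * (b:ℂ) ^ 2 / 2 - Complex.I) * hEinv
      · intro h
        linear_combination (E⁻¹ / 2) * h
          + (E / 2) * (Complex.I + -Complex.I * (b:ℂ) ^ 2 / 2) * hEinv
    rw [show -Complex.I * (b:ℂ) ^ 2 / 2 * ((E + E⁻¹) / 2)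
        = -Complex.I * (b:ℂ) ^ 2 / 2 * ((E + E⁻¹) / 2) from rfl] at *
    rw [h12, eq_div_iff hb2c]
    constructor
    · intro h
      linear_combination (2 * Complex.I) * h
        - (2 - 2 * E ^ 2 + (b:ℂ) ^ 2 * E ^ 2 + (b:ℂ) ^ 2) * hI2
    · intro h
      linear_combination (-Complex.I / 2) * h
  have step3 : Complex.exp (2 * w * Complex.I) = (r : ℂ) ↔
      ∃ n : ℤ, k = (n : ℂ) * Real.pi / l
        + (Complex.I / (2 * l)) * Real.log ((2 - b ^ 2) / (2 + b ^ 2)) := by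
    have hexp : (r : ℂ) = Complex.exp ((Real.log r : ℝ) : ℂ) := by
      rw [← Complex.ofReal_exp, Real.exp_log hrpos]
    rw [hexp, Complex.exp_eq_exp_iff_exists_int]
    constructor
    · rintro ⟨n, hn⟩
      refine ⟨n, ?_⟩
      rw [hL]
      push_cast
      rw [hw] at hn
      field_simp
      linear_combination (-Complex.I) * hn
        + (2 * k * (l:ℂ) - 2 * (n:ℂ) * Real.pi) * hI2
    · rintro ⟨n, hn⟩
      refine ⟨n, ?_⟩
      rw [hL] at hn
      push_cast at hn
      rw [hw, hn]
      field_simp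
      linear_combination -((Real.log r : ℝ) : ℂ) * hI2
  rw [step1, step2, step3]
end
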